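/- Let A be a real symmetric n×n matrix with spectral decomposition A = Σ_{k=1}^s λ_k P_k P_k^T and let α, α̃ ∈ ℝ^n. Then for all x not an eigenvalue of A, det(xI − (A + αα^T + α̃α̃^T)) = det(xI − A) · [ (1 − Σ_k ‖P_k^T α‖²/(x−λ_k)) (1 − Σ_k ‖P_k^T α̃‖²/(x−λ_k)) − (Σ_k ⟨P_k^T α, P_k^T α̃⟩/(x−λ_k))² ]. -/
import Mathlib


open Matrix

theorem stmt_6 (n s : ℕ) (A : Matrix (Fin n) (Fin n) ℝ) (hA : A.IsSymm)
    (lam : Fin s → ℝ) (hlam : Function.Injective lam)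
    (r : Fin s → ℕ) (P : ∀ k : Fin s, Matrix (Fin n) (Fin (r k)) ℝ)
    (hP1 : ∀ k, (P k)ᵀ * P k = 1)
    (hP2 : ∀ k, A * P k = lam k • P k)
    (hPsum : A = ∑ k, lam k • (P k * (P k)ᵀ))
    (hPcomp : ∑ k, P k * (P k)ᵀ = 1)
    (α α' : Fin n → ℝ) (x : ℝ) (hx : ∀ k, x ≠ lam k) :
    (x • (1 : Matrix (Fin n) (Fin n) ℝ)
        - (A + Matrix.vecMulVec α α + Matrix.vecMulVec α' α')).det =
    (x • (1 : Matrix (Fin n) (Fin n) ℝ) - A).det *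
      ((1 - ∑ k, ((P k)ᵀ.mulVec α) ⬝ᵥ ((P k)ᵀ.mulVec α) / (x - lam k)) *
       (1 - ∑ k, ((P k)ᵀ.mulVec α') ⬝ᵥ ((P k)ᵀ.mulVec α') / (x - lam k)) -
       (∑ k, ((P k)ᵀ.mulVec α) ⬝ᵥ ((P k)ᵀ.mulVec α') / (x - lam k)) ^ 2) := by
  classical
  have hxl : ∀ k, x - lam k ≠ 0 := fun k => sub_ne_zero.mpr (hx k)
  set M : Matrix (Fin n) (Fin n) ℝ := x • 1 - A with hMdef
  set N : Matrix (Fin n) (Fin n) ℝ := ∑ k, (x - lam k)⁻¹ • (P k * (P k)ᵀ) with hNdef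
  -- orthogonality between distinct eigenspaces
  have horth : ∀ j k : Fin s, j ≠ k → (P j)ᵀ * P k = 0 := by
    intro j k hjk
    have h1 : (P j)ᵀ * A = lam j • (P j)ᵀ := by
      calc (P j)ᵀ * A = (Aᵀ * P j)ᵀ := by rw [transpose_mul, transpose_transpose]
        _ = (A * P j)ᵀ := by rw [hA.eq]
        _ = lam j • (P j)ᵀ := by rw [hP2, transpose_smul]
    have h2 : lam j • ((P j)ᵀ * P k) = lam k • ((P j)ᵀ * P k) := by
      calc lam j • ((P j)ᵀ * P k) = ((P j)ᵀ * A) * P k := by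
            rw [h1, Matrix.smul_mul]
        _ = (P j)ᵀ * (A * P k) := by rw [Matrix.mul_assoc]
        _ = lam k • ((P j)ᵀ * P k) := by rw [hP2, Matrix.mul_smul]
    have hne : lam j - lam k ≠ 0 := sub_ne_zero.mpr fun h => hjk (hlam h)
    have h3 : (lam j - lam k) • ((P j)ᵀ * P k) = 0 := by
      rw [sub_smul, h2, sub_self]
    exact (smul_eq_zero.mp h3).resolve_left hne
  have hproj : ∀ j k : Fin s,
      (P j * (P j)ᵀ) * (P k * (P k)ᵀ) =
        if j = k then P j * (P j)ᵀ else 0 := by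
    intro j k
    by_cases h : j = k
    · subst h
      simp [Matrix.mul_assoc, ← Matrix.mul_assoc (P j)ᵀ, hP1 j]
    · simp only [if_neg h]
      calc (P j * (P j)ᵀ) * (P k * (P k)ᵀ)
          = P j * (((P j)ᵀ * P k) * (P k)ᵀ) := by
            rw [Matrix.mul_assoc, Matrix.mul_assoc]
        _ = 0 := by rw [horth j k h, Matrix.zero_mul, Matrix.mul_zero]
  have hMsum : M = ∑ k, (x - lam k) • (P k * (P k)ᵀ) := by
    rw [hMdef]
    conv_lhs => rw [← hPcomp, hPsum]
    rw [Finset.smul_sum, ← Finset.sum_sub_distrib]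
    exact Finset.sum_congr rfl fun k _ => by rw [sub_smul]
  have hMN : M * N = 1 := by
    rw [hMsum, hNdef, Finset.sum_mul_sum]
    have : ∀ j ∈ (Finset.univ : Finset (Fin s)),
        ∑ k, ((x - lam j) • (P j * (P j)ᵀ)) * ((x - lam k)⁻¹ • (P k * (P k)ᵀ))
          = P j * (P j)ᵀ := by
      intro j _
      rw [Finset.sum_eq_single j]
      · rw [Matrix.smul_mul, Matrix.mul_smul, hproj j j, if_pos rfl,
          smul_smul, mul_inv_cancel₀ (hxl j), one_smul]
      · intro k _ hkj
        rw [Matrix.smul_mul, Matrix.mul_smul, hproj j k, if_neg (Ne.symm hkj),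
          smul_zero, smul_zero]
      · intro h; exact absurd (Finset.mem_univ j) h
    rw [Finset.sum_congr rfl this, hPcomp]
  -- dot product formula
  have hdot : ∀ v w : Fin n → ℝ,
      v ⬝ᵥ N.mulVec w =
        ∑ k, ((P k)ᵀ.mulVec v) ⬝ᵥ ((P k)ᵀ.mulVec w) / (x - lam k) := by
    intro v w
    have hN : N.mulVec w = ∑ k, (x - lam k)⁻¹ • (P k * (P k)ᵀ).mulVec w := by
      rw [hNdef]
      ext i
      simp only [Matrix.mulVec, dotProduct, Finset.sum_apply, Matrix.sum_apply,
        Matrix.smul_apply, Pi.smul_apply, smul_eq_mul, Finset.sum_mul,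
        Finset.mul_sum, mul_assoc]
      rw [Finset.sum_comm]
    have hds : ∀ f : Fin s → Fin n → ℝ, v ⬝ᵥ (∑ k, f k) = ∑ k, v ⬝ᵥ f k := by
      intro f
      simp only [dotProduct, Finset.sum_apply, Finset.mul_sum]
      rw [Finset.sum_comm]
    rw [hN, hds]
    refine Finset.sum_congr rfl fun k _ => ?_
    rw [dotProduct_smul, ← Matrix.mulVec_mulVec, Matrix.dotProduct_mulVec,
      ← Matrix.mulVec_transpose]
    rw [div_eq_inv_mul]
    rfl
  -- the rank-2 update matrix
  set U : Matrix (Fin n) (Fin 2) ℝ := Matrix.of fun i j => ![α i, α' i] j with hUdef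
  have hUUT : U * Uᵀ = Matrix.vecMulVec α α + Matrix.vecMulVec α' α' := by
    ext i j
    simp [hUdef, Matrix.mul_apply, Fin.sum_univ_two, Matrix.vecMulVec_apply]
  have hLHS : x • (1 : Matrix (Fin n) (Fin n) ℝ)
      - (A + Matrix.vecMulVec α α + Matrix.vecMulVec α' α') = M - U * Uᵀ := by
    rw [hUUT, hMdef]
    abel
  have hfac : M - U * Uᵀ = M * (1 - N * (U * Uᵀ)) := by
    rw [Matrix.mul_sub, Matrix.mul_one, ← Matrix.mul_assoc, hMN, Matrix.one_mul]
  have hdet2 : (1 - N * (U * Uᵀ)).det = (1 - Uᵀ * (N * U)).det := by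
    have h1 : 1 - N * (U * Uᵀ) = 1 + (N * U) * (-Uᵀ) := by
      rw [Matrix.mul_neg, ← Matrix.mul_assoc, sub_eq_add_neg]
    rw [h1, Matrix.det_one_add_mul_comm, Matrix.neg_mul, ← sub_eq_add_neg]
  -- entries of the 2x2 matrix
  have hent : ∀ i j : Fin 2, (Uᵀ * (N * U)) i j =
      (fun a => U a i) ⬝ᵥ N.mulVec (fun a => U a j) := by
    intro i j
    simp [Matrix.mul_apply, Matrix.mulVec, dotProduct, Matrix.transpose_apply,
      Finset.mul_sum]
  rw [hLHS, hfac, Matrix.det_mul]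
  congr 1
  rw [hdet2, Matrix.det_fin_two]
  simp only [Matrix.sub_apply, Matrix.one_apply]
  rw [hent 0 0, hent 0 1, hent 1 0, hent 1 1]
  have hc0 : (fun a => U a 0) = α := by funext a; simp [hUdef]
  have hc1 : (fun a => U a 1) = α' := by funext a; simp [hUdef]
  rw [hc0, hc1, hdot, hdot, hdot, hdot]
  have hba : (∑ k, ((P k)ᵀ.mulVec α') ⬝ᵥ ((P k)ᵀ.mulVec α) / (x - lam k))
      = ∑ k, ((P k)ᵀ.mulVec α) ⬝ᵥ ((P k)ᵀ.mulVec α') / (x - lam k) := by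
    exact Finset.sum_congr rfl fun k _ => by rw [dotProduct_comm]
  rw [hba]
  norm_num
  simp only [div_eq_mul_inv]
  ring
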